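/- The rectangle X = [0, N♯] × [0, W♯], where N♯ = (ρ_N − α_N)/β_N and W♯ = (ρ_W − α_W)/β_W, is forward invariant for the Wolbachia system: any solution with initial condition in X remains in X for all t ≥ 0. -/

import Mathlib

open Set

lemma barrier_aux {f f' : ℝ → ℝ} {a b K : ℝ}
    (hd : ∀ s, HasDerivAt f (f' s) s)
    (hineq : ∀ s ∈ Set.Icc a b, 0 ≤ f s → f' s ≤ K * f s)
    (ha : f a ≤ 0) : ∀ s ∈ Set.Icc a b, f s ≤ 0 := by
  intro s₁ hs₁
  by_contra hpos
  push_neg at hpos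
  have hcont : Continuous f := by
    rw [continuous_iff_continuousAt]; exact fun x => (hd x).continuousAt
  have has₁ : a ≤ s₁ := hs₁.1
  set Z : Set ℝ := Set.Icc a s₁ ∩ f ⁻¹' {0} with hZdef
  have hzne : Z.Nonempty := by
    obtain ⟨z, hz, hfz⟩ := intermediate_value_Icc has₁ hcont.continuousOn
      (⟨ha, hpos.le⟩ : (0:ℝ) ∈ Set.Icc (f a) (f s₁))
    exact ⟨z, hz, hfz⟩
  have hZc : IsCompact Z := isCompact_Icc.inter_right (isClosed_singleton.preimage hcont)
  set s₀ := sSup Z with hs₀def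
  have hs₀Z : s₀ ∈ Z := hZc.sSup_mem hzne
  have hfs₀ : f s₀ = 0 := hs₀Z.2
  have hs₀mem : s₀ ∈ Set.Icc a s₁ := hs₀Z.1
  have hge : ∀ s ∈ Set.Icc s₀ s₁, 0 ≤ f s := by
    intro s hs
    by_contra hneg
    push_neg at hneg
    obtain ⟨z, hz, hfz⟩ := intermediate_value_Icc hs.2 hcont.continuousOn
      (⟨hneg.le, hpos.le⟩ : (0:ℝ) ∈ Set.Icc (f s) (f s₁))
    have hss₀ : s₀ < s := by
      rcases eq_or_lt_of_le hs.1 with h | h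
      · rw [← h] at hneg; linarith
      · exact h
    have hzZ : z ∈ Z := ⟨⟨hs₀mem.1.trans (hss₀.le.trans hz.1), hz.2⟩, hfz⟩
    have : z ≤ s₀ := le_csSup hZc.bddAbove hzZ
    linarith [hz.1]
  have hbnd := le_gronwallBound_of_liminf_deriv_right_le (f := f) (f' := f')
    (δ := 0) (K := K) (ε := 0) (a := s₀) (b := s₁) hcont.continuousOn
    (fun x _ r hr => (hd x).hasDerivWithinAt.liminf_right_slope_le hr)
    (le_of_eq hfs₀)
    (fun x hx => by
      have hxab : x ∈ Set.Icc a b := ⟨hs₀mem.1.trans hx.1, hx.2.le.trans hs₁.2⟩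
      have h0 : 0 ≤ f x := hge x ⟨hx.1, hx.2.le⟩
      have := hineq x hxab h0
      linarith)
    s₁ ⟨hs₀mem.2, le_rfl⟩
  rw [gronwallBound_ε0_δ0] at hbnd
  linarith

theorem stmt_3 (ρN ρW αN αW βN βW : ℝ)
    (hρN : 0 < ρN) (hρW : 0 < ρW) (hαN : 0 < αN) (hαW : 0 < αW)
    (hβN : 0 < βN) (hβW : 0 < βW)
    (hsN : αN < ρN) (hsW : αW < ρW)
    (N W : ℝ → ℝ)
    (hN : ∀ t : ℝ, HasDerivAt N
      (ρN * (N t)^2 / (N t + W t) - αN * N t - βN * N t * (N t + W t)) t)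
    (hW : ∀ t : ℝ, HasDerivAt W
      (ρW * W t - αW * W t - βW * W t * (N t + W t)) t)
    (hN0 : N 0 ∈ Set.Icc 0 ((ρN - αN) / βN))
    (hW0 : W 0 ∈ Set.Icc 0 ((ρW - αW) / βW)) :
    ∀ t : ℝ, 0 ≤ t →
      N t ∈ Set.Icc 0 ((ρN - αN) / βN) ∧ W t ∈ Set.Icc 0 ((ρW - αW) / βW) := by
  set NS := (ρN - αN) / βN with hNSdef
  set WS := (ρW - αW) / βW with hWSdef
  have hNSpos : 0 < NS := div_pos (by linarith) hβN
  have hWSpos : 0 < WS := div_pos (by linarith) hβW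
  have hNSeq : βN * NS = ρN - αN := by rw [hNSdef]; field_simp
  have hWSeq : βW * WS = ρW - αW := by rw [hWSdef]; field_simp
  have hNcont : Continuous N := by
    rw [continuous_iff_continuousAt]; exact fun x => (hN x).continuousAt
  have hWcont : Continuous W := by
    rw [continuous_iff_continuousAt]; exact fun x => (hW x).continuousAt
  -- local forward invariance
  have key : ∀ t₀ : ℝ, N t₀ ∈ Set.Icc 0 NS → W t₀ ∈ Set.Icc 0 WS →
      ∃ ε > 0, ∀ s ∈ Set.Icc t₀ (t₀ + ε),
        N s ∈ Set.Icc 0 NS ∧ W s ∈ Set.Icc 0 WS := by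
    intro t₀ hNt₀ hWt₀
    set δ : ℝ := min 1 (if 0 < W t₀ then W t₀ / 4 else 1) with hδdef
    have hδpos : 0 < δ := by
      apply lt_min one_pos
      split_ifs with h
      · linarith
      · exact one_pos
    have hδ1 : δ ≤ 1 := min_le_left _ _
    have hδW : 0 < W t₀ → δ ≤ W t₀ / 4 := by
      intro h; rw [hδdef, if_pos h]; exact min_le_right _ _
    have hev : ∀ᶠ s in nhds t₀, |N s - N t₀| < δ ∧ |W s - W t₀| < δ := by
      have h1 : ∀ᶠ s in nhds t₀, dist (N s) (N t₀) < δ :=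
        Metric.tendsto_nhds.1 (hNcont.tendsto t₀) δ hδpos
      have h2 : ∀ᶠ s in nhds t₀, dist (W s) (W t₀) < δ :=
        Metric.tendsto_nhds.1 (hWcont.tendsto t₀) δ hδpos
      filter_upwards [h1, h2] with s hs1 hs2
      rw [Real.dist_eq] at hs1 hs2
      exact ⟨hs1, hs2⟩
    rw [Metric.eventually_nhds_iff] at hev
    obtain ⟨ε', hε'pos, hball⟩ := hev
    refine ⟨ε' / 2, by linarith, ?_⟩
    set ε := ε' / 2 with hεdef
    have hJ : ∀ s ∈ Set.Icc t₀ (t₀ + ε), |N s - N t₀| < δ ∧ |W s - W t₀| < δ := by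
      intro s hs
      apply hball
      rw [Real.dist_eq, abs_of_nonneg (by linarith [hs.1])]
      have := hs.2
      rw [hεdef] at this
      linarith
    have hNb : ∀ s ∈ Set.Icc t₀ (t₀ + ε), -1 ≤ N s ∧ N s ≤ NS + 1 := by
      intro s hs
      have h := (hJ s hs).1
      rw [abs_lt] at h
      constructor <;> [linarith [hNt₀.1]; linarith [hNt₀.2]]
    have hWb : ∀ s ∈ Set.Icc t₀ (t₀ + ε), -1 ≤ W s ∧ W s ≤ WS + 1 := by
      intro s hs
      have h := (hJ s hs).2
      rw [abs_lt] at h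
      constructor <;> [linarith [hWt₀.1]; linarith [hWt₀.2]]
    -- nonnegativity of W and N on J
    have hnn : ∀ s ∈ Set.Icc t₀ (t₀ + ε), 0 ≤ W s ∧ 0 ≤ N s := by
      rcases lt_or_eq_of_le hWt₀.1 with hWz | hWz
      · -- W t₀ > 0
        have hWnn : ∀ s ∈ Set.Icc t₀ (t₀ + ε), 0 < W s := by
          intro s hs
          have h := (hJ s hs).2
          rw [abs_lt] at h
          have := hδW hWz
          linarith
        have hsum : ∀ s ∈ Set.Icc t₀ (t₀ + ε), 0 ≤ N s + W s := by
          intro s hs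
          have h1 := (hJ s hs).1
          have h2 := (hJ s hs).2
          rw [abs_lt] at h1 h2
          have := hδW hWz
          have := hNt₀.1
          linarith
        have hNnn := barrier_aux (f := fun t => -N t)
          (f' := fun s => -(ρN * (N s)^2 / (N s + W s) - αN * N s - βN * N s * (N s + W s)))
          (a := t₀) (b := t₀ + ε) (K := 1)
          (fun s => (hN s).neg)
          (fun s hs hge => by
            have hN0s : N s ≤ 0 := by linarith
            have hsum' := hsum s hs
            have hterm : 0 ≤ ρN * (N s)^2 / (N s + W s) :=
              div_nonneg (mul_nonneg hρN.le (sq_nonneg _)) hsum'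
            have h5 : αN * N s ≤ 0 := mul_nonpos_of_nonneg_of_nonpos hαN.le hN0s
            have h6 : βN * N s * (N s + W s) ≤ 0 :=
              mul_nonpos_of_nonpos_of_nonneg
                (mul_nonpos_of_nonneg_of_nonpos hβN.le hN0s) hsum'
            linarith)
          (by simp; exact hNt₀.1)
        intro s hs
        exact ⟨(hWnn s hs).le, by have := hNnn s hs; linarith⟩
      · -- W t₀ = 0
        set K : ℝ := ρW + βW * (NS + WS + 2) with hKdef
        have hKcoef : ∀ s ∈ Set.Icc t₀ (t₀ + ε),
            ρW - αW - βW * (N s + W s) ≤ K := by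
          intro s hs
          have h1 := (hNb s hs).1
          have h2 := (hWb s hs).1
          have h3 : -(N s + W s) ≤ NS + WS + 2 := by
            have := hNSpos; have := hWSpos; linarith
          have h5 := mul_le_mul_of_nonneg_left h3 hβW.le
          have h6 : βW * -(N s + W s) = -(βW * (N s + W s)) := by ring
          rw [hKdef]
          linarith
        have hWle := barrier_aux (f := fun t => W t)
          (f' := fun s => ρW * W s - αW * W s - βW * W s * (N s + W s))
          (a := t₀) (b := t₀ + ε) (K := K)
          (fun s => hW s)
          (fun s hs hge => by
            have hc := hKcoef s hs
            have h5 := mul_le_mul_of_nonneg_left hc hge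
            have h6 : W s * (ρW - αW - βW * (N s + W s)) =
                ρW * W s - αW * W s - βW * W s * (N s + W s) := by ring
            have h7 : W s * K = K * W s := by ring
            linarith)
          (by linarith)
        have hWge := barrier_aux (f := fun t => -W t)
          (f' := fun s => -(ρW * W s - αW * W s - βW * W s * (N s + W s)))
          (a := t₀) (b := t₀ + ε) (K := K)
          (fun s => (hW s).neg)
          (fun s hs hge => by
            have hc := hKcoef s hs
            have h5 := mul_le_mul_of_nonneg_left hc hge
            have h6 : -W s * (ρW - αW - βW * (N s + W s)) =
                -(ρW * W s - αW * W s - βW * W s * (N s + W s)) := by ring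
            have h7 : -W s * K = K * -W s := by ring
            linarith)
          (by linarith)
        have hWzero : ∀ s ∈ Set.Icc t₀ (t₀ + ε), W s = 0 := by
          intro s hs
          have h1 := hWle s hs
          have h2 := hWge s hs
          linarith
        have hNnn := barrier_aux (f := fun t => -N t)
          (f' := fun s => -(ρN * (N s)^2 / (N s + W s) - αN * N s - βN * N s * (N s + W s)))
          (a := t₀) (b := t₀ + ε) (K := ρN + βN)
          (fun s => (hN s).neg)
          (fun s hs hge => by
            have hN0s : N s ≤ 0 := by linarith
            have hw0 : W s = 0 := hWzero s hs
            have hm1 : -1 ≤ N s := (hNb s hs).1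
            rcases eq_or_lt_of_le hN0s with heq | hlt
            · rw [heq, hw0]
              norm_num
            · have hne : N s ≠ 0 := ne_of_lt hlt
              have hterm : ρN * (N s)^2 / (N s + W s) = ρN * N s := by
                rw [hw0, add_zero, div_eq_iff hne]; ring
              rw [hterm, hw0]
              have h7 : 0 ≤ (-(N s)) * (N s + 1) :=
                mul_nonneg (by linarith) (by linarith)
              nlinarith)
          (by linarith [hNt₀.1])
        intro s hs
        refine ⟨le_of_eq (hWzero s hs).symm, ?_⟩
        have := hNnn s hs
        linarith
    have hNnn : ∀ s ∈ Set.Icc t₀ (t₀ + ε), 0 ≤ N s := fun s hs => (hnn s hs).2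
    have hWnn : ∀ s ∈ Set.Icc t₀ (t₀ + ε), 0 ≤ W s := fun s hs => (hnn s hs).1
    -- upper bounds on J
    have hWup : ∀ s ∈ Set.Icc t₀ (t₀ + ε), W s ≤ WS := by
      have hb := barrier_aux (f := fun t => W t - WS)
        (f' := fun s => ρW * W s - αW * W s - βW * W s * (N s + W s))
        (a := t₀) (b := t₀ + ε) (K := 1)
        (fun s => (hW s).sub_const WS)
        (fun s hs hge => by
          have h1 : 0 ≤ N s := hNnn s hs
          have h2 : 0 ≤ W s := hWnn s hs
          have hge' : WS ≤ W s := by linarith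
          have h3 : 0 ≤ βW * W s * (N s + W s - WS) :=
            mul_nonneg (mul_nonneg hβW.le h2) (by linarith)
          have h4 : (ρW - αW) * W s = βW * WS * W s := by rw [← hWSeq]
          have hexp : βW * W s * (N s + W s) =
              βW * W s * (N s + W s - WS) + βW * WS * W s := by ring
          have h5 : (ρW - αW) * W s = ρW * W s - αW * W s := by ring
          linarith)
        (by linarith [hWt₀.2])
      intro s hs
      have := hb s hs
      linarith
    have hNup : ∀ s ∈ Set.Icc t₀ (t₀ + ε), N s ≤ NS := by
      have hb := barrier_aux (f := fun t => N t - NS)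
        (f' := fun s => ρN * (N s)^2 / (N s + W s) - αN * N s - βN * N s * (N s + W s))
        (a := t₀) (b := t₀ + ε) (K := 1)
        (fun s => (hN s).sub_const NS)
        (fun s hs hge => by
          have h1 : 0 ≤ W s := hWnn s hs
          have h2 : NS ≤ N s := by linarith
          have hNpos : 0 < N s := lt_of_lt_of_le hNSpos h2
          have hsum : 0 < N s + W s := by linarith
          have hdiv : ρN * (N s)^2 / (N s + W s) ≤ ρN * N s := by
            rw [div_le_iff₀ hsum]
            nlinarith [mul_nonneg (mul_nonneg hρN.le hNpos.le) h1]
          have h3 : 0 ≤ βN * N s * (N s - NS) :=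
            mul_nonneg (mul_nonneg hβN.le hNpos.le) (by linarith)
          have h4 : (ρN - αN) * N s = βN * NS * N s := by rw [← hNSeq]
          have hbw : 0 ≤ βN * N s * W s :=
            mul_nonneg (mul_nonneg hβN.le hNpos.le) h1
          have hexp : βN * N s * (N s + W s) =
              βN * N s * (N s - NS) + βN * NS * N s + βN * N s * W s := by ring
          have h5 : (ρN - αN) * N s = ρN * N s - αN * N s := by ring
          linarith)
        (by linarith [hNt₀.2])
      intro s hs
      have := hb s hs
      linarith
    exact fun s hs => ⟨⟨hNnn s hs, hNup s hs⟩, ⟨hWnn s hs, hWup s hs⟩⟩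
  -- global argument
  suffices hmain : ∀ t : ℝ, 0 ≤ t →
      ∀ s ∈ Set.Icc (0:ℝ) t, N s ∈ Set.Icc 0 NS ∧ W s ∈ Set.Icc 0 WS by
    intro t ht; exact hmain t ht t ⟨ht, le_refl t⟩
  intro t ht
  by_contra hB
  rw [not_forall] at hB
  obtain ⟨s₁, hs₁⟩ := hB
  rw [Classical.not_imp] at hs₁
  obtain ⟨hs₁mem, hs₁P⟩ := hs₁
  set Bset : Set ℝ :=
    {s | s ∈ Set.Icc (0:ℝ) t ∧ ¬(N s ∈ Set.Icc 0 NS ∧ W s ∈ Set.Icc 0 WS)} with hBdef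
  have hne : Bset.Nonempty := ⟨s₁, hs₁mem, hs₁P⟩
  have hbdd : BddBelow Bset := ⟨0, fun x hx => hx.1.1⟩
  set c := sInf Bset with hcdef
  have hc0 : 0 ≤ c := le_csInf hne fun x hx => hx.1.1
  have hct : c ≤ t := (csInf_le hbdd ⟨hs₁mem, hs₁P⟩).trans hs₁mem.2
  have hlt : ∀ s, 0 ≤ s → s < c → N s ∈ Set.Icc 0 NS ∧ W s ∈ Set.Icc 0 WS := by
    intro s hs hsc
    by_contra hP
    have : c ≤ s := csInf_le hbdd ⟨⟨hs, hsc.le.trans hct⟩, hP⟩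
    linarith
  have hPc : N c ∈ Set.Icc 0 NS ∧ W c ∈ Set.Icc 0 WS := by
    rcases eq_or_lt_of_le hc0 with hc | hc
    · rw [← hc]; exact ⟨hN0, hW0⟩
    · have hev : ∀ᶠ s in nhdsWithin c (Set.Iio c),
          N s ∈ Set.Icc 0 NS ∧ W s ∈ Set.Icc 0 WS := by
        have h1 : ∀ᶠ s in nhdsWithin c (Set.Iio c), 0 < s :=
          eventually_nhdsWithin_of_eventually_nhds (eventually_gt_nhds hc)
        filter_upwards [h1, self_mem_nhdsWithin] with s hs1 hs2
        exact hlt s hs1.le hs2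
      have htN : Filter.Tendsto N (nhdsWithin c (Set.Iio c)) (nhds (N c)) :=
        (hNcont.tendsto c).mono_left nhdsWithin_le_nhds
      have htW : Filter.Tendsto W (nhdsWithin c (Set.Iio c)) (nhds (W c)) :=
        (hWcont.tendsto c).mono_left nhdsWithin_le_nhds
      exact ⟨isClosed_Icc.mem_of_tendsto htN (hev.mono fun s hs => hs.1),
        isClosed_Icc.mem_of_tendsto htW (hev.mono fun s hs => hs.2)⟩
  obtain ⟨ε, hεpos, hJ⟩ := key c hPc.1 hPc.2
  have hfinal : c + ε ≤ c := by
    rw [hcdef]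
    apply le_csInf hne
    intro x hx
    by_contra hxε
    push_neg at hxε
    have hcx : c ≤ x := csInf_le hbdd hx
    exact hx.2 (hJ x ⟨hcx, hxε.le⟩)
  linarith
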